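/- arXiv:1109.1919 — 2 statements merged into one kernel-verified Lean document; each statement's English description precedes it below -/
import Mathlib

section
/- Composition of gauge transformations: if (f, c) : (x, g, a) → (x', g', a') and (f', c') : (x', g', a') → (x'', g'', a'') are gauge transformations between descent data in a cosimplicial crossed groupoid G, then (f' ∘ f, c ∘ Ad(f_{(0)}⁻¹)(c')) is a gauge transformation (x, g, a) → (x'', g'', a''). -/
/-! Crossed groupoids (= crossed modules over groupoids), following Yekutieli,
"Combinatorial descent data for gerbes". -/

structure CrossedGroupoid : Type 1 where
  Obj : Type
  Hom : Obj → Obj → Type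
  id : ∀ x, Hom x x
  comp : ∀ {x y z}, Hom y z → Hom x y → Hom x z
  inv : ∀ {x y}, Hom x y → Hom y x
  comp_assoc : ∀ {x y z w} (h : Hom z w) (g : Hom y z) (f : Hom x y),
    comp (comp h g) f = comp h (comp g f)
  id_comp : ∀ {x y} (f : Hom x y), comp (id y) f = f
  comp_id : ∀ {x y} (f : Hom x y), comp f (id x) = f
  inv_comp : ∀ {x y} (f : Hom x y), comp (inv f) f = id x
  comp_inv : ∀ {x y} (f : Hom x y), comp f (inv f) = id y
  -- the totally disconnected groupoid 𝒢₂, i.e. a family of groups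
  G2 : Obj → Type
  mul : ∀ {x}, G2 x → G2 x → G2 x
  one : ∀ x, G2 x
  inv2 : ∀ {x}, G2 x → G2 x
  mul_assoc : ∀ {x} (a b c : G2 x), mul (mul a b) c = mul a (mul b c)
  one_mul : ∀ {x} (a : G2 x), mul (one x) a = a
  mul_one : ∀ {x} (a : G2 x), mul a (one x) = a
  inv2_mul : ∀ {x} (a : G2 x), mul (inv2 a) a = one x
  -- the twisting: an action of 𝒢₁ on 𝒢₂
  Ad : ∀ {x y}, Hom x y → G2 x → G2 y
  Ad_mul : ∀ {x y} (g : Hom x y) (a b : G2 x), Ad g (mul a b) = mul (Ad g a) (Ad g b)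
  Ad_one : ∀ {x y} (g : Hom x y), Ad g (one x) = one y
  Ad_id : ∀ {x} (a : G2 x), Ad (id x) a = a
  Ad_comp : ∀ {x y z} (h : Hom y z) (g : Hom x y) (a : G2 x),
    Ad (comp h g) a = Ad h (Ad g a)
  -- the feedback D : 𝒢₂ → 𝒢₁, identity on objects
  D : ∀ {x}, G2 x → Hom x x
  D_mul : ∀ {x} (a b : G2 x), D (mul a b) = comp (D a) (D b)
  D_one : ∀ x, D (one x) = id x
  -- equivariance of the feedback
  D_Ad : ∀ {x y} (g : Hom x y) (a : G2 x), D (Ad g a) = comp (comp g (D a)) (inv g)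
  -- Peiffer condition
  peiffer : ∀ {x} (a b : G2 x), Ad (D a) b = mul (mul a b) (inv2 a)

namespace CrossedGroupoid

/-- Transport of 1-morphisms along equalities of objects. -/
def hcast (G : CrossedGroupoid) {x x' y y' : G.Obj} (ex : x = x') (ey : y = y')
    (f : G.Hom x y) : G.Hom x' y' := ey ▸ ex ▸ f

/-- Transport of 2-morphisms along an equality of objects. -/
def cast2 (G : CrossedGroupoid) {x x' : G.Obj} (e : x = x') (a : G.G2 x) : G.G2 x' := e ▸ a

/-- The relation "isomorphic in 𝒢₁". -/
def pi0Rel (G : CrossedGroupoid) : G.Obj → G.Obj → Prop := fun x y => Nonempty (G.Hom x y)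

/-- π₀ of a crossed groupoid: isomorphism classes of objects of 𝒢₁. -/
def pi0 (G : CrossedGroupoid) : Type := Quot G.pi0Rel

/-- The right action relation on a hom-set: g' = g ∘ D(a). -/
def homRel (G : CrossedGroupoid) (x x' : G.Obj) : G.Hom x x' → G.Hom x x' → Prop :=
  fun g g' => ∃ a : G.G2 x, g' = G.comp g (G.D a)

/-- π₁(G, x, x') := 𝒢₁(x,x') / 𝒢₂(x). -/
def pi1' (G : CrossedGroupoid) (x x' : G.Obj) : Type := Quot (G.homRel x x')

/-- π₁(G, x) = Coker(D : 𝒢₂(x) → 𝒢₁(x)) as a quotient set. -/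
def pi1 (G : CrossedGroupoid) (x : G.Obj) : Type := G.pi1' x x

/-- π₂(G, x) = Ker(D : 𝒢₂(x) → 𝒢₁(x)). -/
def pi2 (G : CrossedGroupoid) (x : G.Obj) : Type := {a : G.G2 x // G.D a = G.id x}

end CrossedGroupoid

/-- A morphism of crossed groupoids. -/
structure CrossedGroupoidHom (G H : CrossedGroupoid) where
  obj : G.Obj → H.Obj
  map1 : ∀ {x y : G.Obj}, G.Hom x y → H.Hom (obj x) (obj y)
  map2 : ∀ {x : G.Obj}, G.G2 x → H.G2 (obj x)
  map1_comp : ∀ {x y z : G.Obj} (g : G.Hom y z) (f : G.Hom x y),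
    map1 (G.comp g f) = H.comp (map1 g) (map1 f)
  map1_id : ∀ x : G.Obj, map1 (G.id x) = H.id (obj x)
  map2_mul : ∀ {x : G.Obj} (a b : G.G2 x), map2 (G.mul a b) = H.mul (map2 a) (map2 b)
  map_D : ∀ {x : G.Obj} (a : G.G2 x), map1 (G.D a) = H.D (map2 a)
  map_Ad : ∀ {x y : G.Obj} (g : G.Hom x y) (a : G.G2 x),
    map2 (G.Ad g a) = H.Ad (map1 g) (map2 a)

namespace CrossedGroupoidHom

/-- Identity morphism of crossed groupoids. -/
def id (G : CrossedGroupoid) : CrossedGroupoidHom G G where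
  obj := fun x => x
  map1 := fun f => f
  map2 := fun a => a
  map1_comp := fun _ _ => rfl
  map1_id := fun _ => rfl
  map2_mul := fun _ _ => rfl
  map_D := fun _ => rfl
  map_Ad := fun _ _ => rfl

/-- Composition of morphisms of crossed groupoids. -/
def comp {G H K : CrossedGroupoid} (F₂ : CrossedGroupoidHom H K) (F₁ : CrossedGroupoidHom G H) :
    CrossedGroupoidHom G K where
  obj := fun x => F₂.obj (F₁.obj x)
  map1 := fun f => F₂.map1 (F₁.map1 f)
  map2 := fun a => F₂.map2 (F₁.map2 a)
  map1_comp := fun g f => by (try dsimp only); rw [F₁.map1_comp, F₂.map1_comp]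
  map1_id := fun x => by (try dsimp only); rw [F₁.map1_id, F₂.map1_id]
  map2_mul := fun a b => by (try dsimp only); rw [F₁.map2_mul, F₂.map2_mul]
  map_D := fun a => by (try dsimp only); rw [F₁.map_D, F₂.map_D]
  map_Ad := fun g a => by (try dsimp only); rw [F₁.map_Ad, F₂.map_Ad]

variable {G H : CrossedGroupoid}

/-- The induced map on π₀. -/
def pi0map (F : CrossedGroupoidHom G H) : G.pi0 → H.pi0 :=
  Quot.map F.obj (fun _ _ h => ⟨F.map1 h.some⟩)

/-- The induced map on π₁(−, x, x'). -/
def pi1'map (F : CrossedGroupoidHom G H) (x x' : G.Obj) :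
    G.pi1' x x' → H.pi1' (F.obj x) (F.obj x') :=
  Quot.map F.map1 (by
    rintro g g' ⟨a, rfl⟩
    exact ⟨F.map2 a, by rw [F.map1_comp, F.map_D]⟩)

/-- The induced map on π₁(−, x). -/
def pi1map (F : CrossedGroupoidHom G H) (x : G.Obj) : G.pi1 x → H.pi1 (F.obj x) :=
  F.pi1'map x x

/-- The induced map on π₂(−, x). -/
def pi2map (F : CrossedGroupoidHom G H) (x : G.Obj) : G.pi2 x → H.pi2 (F.obj x) :=
  fun a => ⟨F.map2 a.1, by rw [← F.map_D, a.2, F.map1_id]⟩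

/-- A weak equivalence of crossed groupoids: bijective on π₀, π₁ and π₂. -/
def IsWeakEquiv (F : CrossedGroupoidHom G H) : Prop :=
  Function.Bijective F.pi0map ∧ (∀ x, Function.Bijective (F.pi1map x)) ∧
    (∀ x, Function.Bijective (F.pi2map x))

end CrossedGroupoidHom

/-! ### Combinatorics of the simplex category -/

/-- The vertex (i) of Δ^q, as a monotone map Δ⁰ → Δ^q. -/
def vtxMap {q : ℕ} (i : Fin (q + 1)) : Fin 1 →o Fin (q + 1) :=
  ⟨fun _ => i, fun _ _ _ => le_rfl⟩

/-- The edge (i,j) of Δ^q, as a monotone map Δ¹ → Δ^q. -/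
def edgeMap {q : ℕ} (i j : Fin (q + 1)) (h : i ≤ j) : Fin 2 →o Fin (q + 1) :=
  ⟨fun k => if (k : ℕ) = 0 then i else j, by
    intro a b hab
    have hab' : (a : ℕ) ≤ (b : ℕ) := hab
    show (if (a : ℕ) = 0 then i else j) ≤ (if (b : ℕ) = 0 then i else j)
    by_cases ha : (a : ℕ) = 0
    · by_cases hb : (b : ℕ) = 0
      · rw [if_pos ha, if_pos hb]
      · rw [if_pos ha, if_neg hb]; exact h
    · have hb : ¬ (b : ℕ) = 0 := fun hb0 => ha (Nat.le_zero.mp (hb0 ▸ hab'))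
      rw [if_neg ha, if_neg hb]⟩

/-- The triangle (i,j,k) of Δ^q, as a monotone map Δ² → Δ^q. -/
def triMap {q : ℕ} (i j k : Fin (q + 1)) (hij : i ≤ j) (hjk : j ≤ k) :
    Fin 3 →o Fin (q + 1) :=
  ⟨fun m => if (m : ℕ) = 0 then i else if (m : ℕ) = 1 then j else k, by
    intro a b hab
    have hab' : (a : ℕ) ≤ (b : ℕ) := hab
    show (if (a : ℕ) = 0 then i else if (a : ℕ) = 1 then j else k) ≤
      (if (b : ℕ) = 0 then i else if (b : ℕ) = 1 then j else k)
    by_cases ha0 : (a : ℕ) = 0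
    · by_cases hb0 : (b : ℕ) = 0
      · rw [if_pos ha0, if_pos hb0]
      · by_cases hb1 : (b : ℕ) = 1
        · rw [if_pos ha0, if_neg hb0, if_pos hb1]; exact hij
        · rw [if_pos ha0, if_neg hb0, if_neg hb1]; exact hij.trans hjk
    · by_cases ha1 : (a : ℕ) = 1
      · have hb0 : ¬ (b : ℕ) = 0 := by omega
        by_cases hb1 : (b : ℕ) = 1
        · rw [if_neg ha0, if_pos ha1, if_neg hb0, if_pos hb1]
        · rw [if_neg ha0, if_pos ha1, if_neg hb0, if_neg hb1]; exact hjk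
      · have hb0 : ¬ (b : ℕ) = 0 := by omega
        have hb1 : ¬ (b : ℕ) = 1 := by omega
        rw [if_neg ha0, if_neg ha1, if_neg hb0, if_neg hb1]⟩

theorem comp_vtxMap {p q : ℕ} (α : Fin (p + 1) →o Fin (q + 1)) (i : Fin (p + 1)) :
    α.comp (vtxMap i) = vtxMap (α i) := rfl

/-! ### Cosimplicial crossed groupoids -/

/-- A cosimplicial crossed groupoid: a functor Δ → CrGrpd. -/
structure CosimplicialCrossedGroupoid : Type 1 where
  obj : ℕ → CrossedGroupoid
  map : ∀ {p q : ℕ}, (Fin (p + 1) →o Fin (q + 1)) → CrossedGroupoidHom (obj p) (obj q)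
  map_id : ∀ p, map (OrderHom.id : Fin (p + 1) →o Fin (p + 1)) = CrossedGroupoidHom.id (obj p)
  map_comp : ∀ {p q r : ℕ} (β : Fin (q + 1) →o Fin (r + 1)) (α : Fin (p + 1) →o Fin (q + 1)),
    map (β.comp α) = (map β).comp (map α)

namespace CosimplicialCrossedGroupoid

variable (G : CosimplicialCrossedGroupoid)

theorem obj_comp {p q r : ℕ} (β : Fin (q + 1) →o Fin (r + 1)) (α : Fin (p + 1) →o Fin (q + 1))
    (x : (G.obj p).Obj) :
    (G.map β).obj ((G.map α).obj x) = (G.map (β.comp α)).obj x := by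
  rw [G.map_comp]; rfl

/-- The object x of G⁰ pushed to the vertex (i) of Δ^q. -/
def X (x : (G.obj 0).Obj) (q : ℕ) (i : Fin (q + 1)) : (G.obj q).Obj :=
  (G.map (vtxMap i)).obj x

theorem X_push (x : (G.obj 0).Obj) {p q : ℕ} (α : Fin (p + 1) →o Fin (q + 1))
    (i : Fin (p + 1)) : (G.map α).obj (G.X x p i) = G.X x q (α i) := by
  unfold X
  rw [obj_comp, comp_vtxMap]

/-- Pushing a 1-morphism between vertex objects along α. -/
def push1 {x : (G.obj 0).Obj} {p q : ℕ} (α : Fin (p + 1) →o Fin (q + 1))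
    {i j : Fin (p + 1)} (g : (G.obj p).Hom (G.X x p i) (G.X x p j)) :
    (G.obj q).Hom (G.X x q (α i)) (G.X x q (α j)) :=
  (G.obj q).hcast (G.X_push x α i) (G.X_push x α j) ((G.map α).map1 g)

/-- Pushing a 2-morphism at a vertex object along α. -/
def push2 {x : (G.obj 0).Obj} {p q : ℕ} (α : Fin (p + 1) →o Fin (q + 1))
    {i : Fin (p + 1)} (a : (G.obj p).G2 (G.X x p i)) :
    (G.obj q).G2 (G.X x q (α i)) :=
  (G.obj q).cast2 (G.X_push x α i) ((G.map α).map2 a)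

/-- Yekutieli's combinatorial descent conditions (Definition 1.5):
the failure-of-1-cocycle condition and the twisted 2-cocycle condition. -/
def IsDescent (x : (G.obj 0).Obj)
    (g : (G.obj 1).Hom (G.X x 1 0) (G.X x 1 1))
    (a : (G.obj 2).G2 (G.X x 2 0)) : Prop :=
  ((G.obj 2).comp ((G.obj 2).comp ((G.obj 2).inv (G.push1 (edgeMap 0 2 (by decide)) g))
      (G.push1 (edgeMap 1 2 (by decide)) g)) (G.push1 (edgeMap 0 1 (by decide)) g)
    = (G.obj 2).D a)
  ∧
  ((G.obj 3).mul ((G.obj 3).mul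
        ((G.obj 3).inv2 (G.push2 (triMap 0 1 3 (by decide) (by decide)) a))
        (G.push2 (triMap 0 2 3 (by decide) (by decide)) a))
      (G.push2 (triMap 0 1 2 (by decide) (by decide)) a)
    = (G.obj 3).Ad ((G.obj 3).inv (G.push1 (edgeMap 0 1 (by decide)) g))
        (G.push2 (triMap 1 2 3 (by decide) (by decide)) a))

/-- A combinatorial descent datum (Definition 1.5). -/
structure Desc (G : CosimplicialCrossedGroupoid) where
  x : (G.obj 0).Obj
  g : (G.obj 1).Hom (G.X x 1 0) (G.X x 1 1)
  a : (G.obj 2).G2 (G.X x 2 0)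
  isDescent : G.IsDescent x g a

/-- The Yekutieli gauge-transformation conditions (Definition 1.7) for a pair (f, c). -/
def IsGauge (x : (G.obj 0).Obj) (g : (G.obj 1).Hom (G.X x 1 0) (G.X x 1 1))
    (a : (G.obj 2).G2 (G.X x 2 0))
    (x' : (G.obj 0).Obj) (g' : (G.obj 1).Hom (G.X x' 1 0) (G.X x' 1 1))
    (a' : (G.obj 2).G2 (G.X x' 2 0))
    (f : (G.obj 0).Hom x x') (c : (G.obj 1).G2 (G.X x 1 0)) : Prop :=
  (g' = (G.obj 1).comp ((G.obj 1).comp ((G.obj 1).comp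
      ((G.map (vtxMap (1 : Fin 2))).map1 f) g) ((G.obj 1).D c))
      ((G.obj 1).inv ((G.map (vtxMap (0 : Fin 2))).map1 f)))
  ∧
  (a' = (G.obj 2).Ad ((G.map (vtxMap (0 : Fin 3))).map1 f)
    ((G.obj 2).mul ((G.obj 2).mul ((G.obj 2).mul
        ((G.obj 2).inv2 (G.push2 (edgeMap 0 2 (by decide)) c)) a)
        ((G.obj 2).Ad ((G.obj 2).inv (G.push1 (edgeMap 0 1 (by decide)) g))
          (G.push2 (edgeMap 1 2 (by decide)) c)))
      (G.push2 (edgeMap 0 1 (by decide)) c)))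

/-- Gauge equivalence of descent data. -/
def GaugeEquiv (P Q : G.Desc) : Prop :=
  ∃ (f : (G.obj 0).Hom P.x Q.x) (c : (G.obj 1).G2 (G.X P.x 1 0)),
    G.IsGauge P.x P.g P.a Q.x Q.g Q.a f c

/-- The explicit formula for the transported 2-morphism a'
(Definition 1.7(ii) / Lemma 1.9). -/
def transportA {x x' : (G.obj 0).Obj} (f : (G.obj 0).Hom x x')
    (g : (G.obj 1).Hom (G.X x 1 0) (G.X x 1 1))
    (a : (G.obj 2).G2 (G.X x 2 0)) (c : (G.obj 1).G2 (G.X x 1 0)) :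
    (G.obj 2).G2 (G.X x' 2 0) :=
  (G.obj 2).Ad ((G.map (vtxMap (0 : Fin 3))).map1 f)
    ((G.obj 2).mul ((G.obj 2).mul ((G.obj 2).mul
        ((G.obj 2).inv2 (G.push2 (edgeMap 0 2 (by decide)) c)) a)
        ((G.obj 2).Ad ((G.obj 2).inv (G.push1 (edgeMap 0 1 (by decide)) g))
          (G.push2 (edgeMap 1 2 (by decide)) c)))
      (G.push2 (edgeMap 0 1 (by decide)) c))

end CosimplicialCrossedGroupoid

/-- A morphism of cosimplicial crossed groupoids. -/
structure CosimplicialMor (G H : CosimplicialCrossedGroupoid) where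
  app : ∀ p, CrossedGroupoidHom (G.obj p) (H.obj p)
  naturality : ∀ {p q : ℕ} (α : Fin (p + 1) →o Fin (q + 1)),
    (app q).comp (G.map α) = (H.map α).comp (app p)

namespace CosimplicialMor

variable {G H : CosimplicialCrossedGroupoid}

theorem app_X (F : CosimplicialMor G H) (x : (G.obj 0).Obj) (q : ℕ) (i : Fin (q + 1)) :
    (F.app q).obj (G.X x q i) = H.X ((F.app 0).obj x) q i :=
  congrFun (congrArg CrossedGroupoidHom.obj (F.naturality (vtxMap i))) x

/-- Image of an object of G⁰. -/
def objD (F : CosimplicialMor G H) (x : (G.obj 0).Obj) : (H.obj 0).Obj := (F.app 0).obj x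

/-- Image of a 1-morphism in dimension 0. -/
def mapF (F : CosimplicialMor G H) {x x' : (G.obj 0).Obj} (f : (G.obj 0).Hom x x') :
    (H.obj 0).Hom (F.objD x) (F.objD x') := (F.app 0).map1 f

/-- Image of the 1-morphism part of a descent datum. -/
def mapG (F : CosimplicialMor G H) {x : (G.obj 0).Obj}
    (g : (G.obj 1).Hom (G.X x 1 0) (G.X x 1 1)) :
    (H.obj 1).Hom (H.X (F.objD x) 1 0) (H.X (F.objD x) 1 1) :=
  (H.obj 1).hcast (F.app_X x 1 0) (F.app_X x 1 1) ((F.app 1).map1 g)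

/-- Image of the 2-morphism part of a descent datum. -/
def mapA (F : CosimplicialMor G H) {x : (G.obj 0).Obj} (a : (G.obj 2).G2 (G.X x 2 0)) :
    (H.obj 2).G2 (H.X (F.objD x) 2 0) :=
  (H.obj 2).cast2 (F.app_X x 2 0) ((F.app 2).map2 a)

/-- Image of the 2-morphism part of a gauge transformation. -/
def mapC (F : CosimplicialMor G H) {x : (G.obj 0).Obj} (c : (G.obj 1).G2 (G.X x 1 0)) :
    (H.obj 1).G2 (H.X (F.objD x) 1 0) :=
  (H.obj 1).cast2 (F.app_X x 1 0) ((F.app 1).map2 c)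

/-- A weak equivalence of cosimplicial crossed groupoids. -/
def IsWeakEquiv (F : CosimplicialMor G H) : Prop := ∀ p, (F.app p).IsWeakEquiv

end CosimplicialMor


/-! ### Auxiliary lemmas for gauge_comp -/

namespace CrossedGroupoid

variable {G : CrossedGroupoid}

-- groupoid lemmas
theorem comp_left_cancel {x y z : G.Obj} {g : G.Hom y z} {f f' : G.Hom x y}
    (h : G.comp g f = G.comp g f') : f = f' := by
  have := congrArg (fun t => G.comp (G.inv g) t) h
  simpa [← G.comp_assoc, G.inv_comp, G.id_comp] using this

theorem inv_inv {x y : G.Obj} (f : G.Hom x y) : G.inv (G.inv f) = f := by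
  apply comp_left_cancel (g := G.inv f)
  rw [G.comp_inv, G.inv_comp]

theorem inv_comp_rev {x y z : G.Obj} (g : G.Hom y z) (f : G.Hom x y) :
    G.inv (G.comp g f) = G.comp (G.inv f) (G.inv g) := by
  apply comp_left_cancel (g := G.comp g f)
  rw [G.comp_inv, G.comp_assoc, ← G.comp_assoc f, G.comp_inv, G.id_comp, G.comp_inv]

theorem inv_comp_cancel_left {x y z : G.Obj} (g : G.Hom y z) (f : G.Hom x y) :
    G.comp (G.inv g) (G.comp g f) = f := by
  rw [← G.comp_assoc, G.inv_comp, G.id_comp]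

theorem comp_inv_cancel_left {x y z : G.Obj} (g : G.Hom y z) (f : G.Hom x z) :
    G.comp g (G.comp (G.inv g) f) = f := by
  rw [← G.comp_assoc, G.comp_inv, G.id_comp]

-- group lemmas for G2
theorem mul_left_cancel' {x : G.Obj} {a b c : G.G2 x}
    (h : G.mul a b = G.mul a c) : b = c := by
  have := congrArg (fun t => G.mul (G.inv2 a) t) h
  simpa [← G.mul_assoc, G.inv2_mul, G.one_mul] using this

theorem mul_inv2 {x : G.Obj} (a : G.G2 x) : G.mul a (G.inv2 a) = G.one x := by
  apply mul_left_cancel' (a := G.inv2 a)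
  rw [← G.mul_assoc, G.inv2_mul, G.one_mul, G.mul_one]

theorem inv2_inv2 {x : G.Obj} (a : G.G2 x) : G.inv2 (G.inv2 a) = a := by
  apply mul_left_cancel' (a := G.inv2 a)
  rw [mul_inv2, G.inv2_mul]

theorem inv2_mul_rev {x : G.Obj} (a b : G.G2 x) :
    G.inv2 (G.mul a b) = G.mul (G.inv2 b) (G.inv2 a) := by
  apply mul_left_cancel' (a := G.mul a b)
  rw [mul_inv2, G.mul_assoc, ← G.mul_assoc b, mul_inv2, G.one_mul, mul_inv2]

theorem inv2_mul_cancel_left {x : G.Obj} (a b : G.G2 x) :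
    G.mul (G.inv2 a) (G.mul a b) = b := by
  rw [← G.mul_assoc, G.inv2_mul, G.one_mul]

theorem mul_inv2_cancel_left {x : G.Obj} (a b : G.G2 x) :
    G.mul a (G.mul (G.inv2 a) b) = b := by
  rw [← G.mul_assoc, mul_inv2, G.one_mul]

theorem Ad_inv2 {x y : G.Obj} (g : G.Hom x y) (a : G.G2 x) :
    G.Ad g (G.inv2 a) = G.inv2 (G.Ad g a) := by
  apply mul_left_cancel' (a := G.Ad g a)
  rw [← G.Ad_mul, mul_inv2, mul_inv2, G.Ad_one]

theorem D_inv2 {x : G.Obj} (a : G.G2 x) : G.D (G.inv2 a) = G.inv (G.D a) := by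
  apply comp_left_cancel (g := G.D a)
  rw [← G.D_mul, mul_inv2, G.D_one, G.comp_inv]

theorem Ad_inv_cancel {x y : G.Obj} (g : G.Hom x y) (a : G.G2 y) :
    G.Ad g (G.Ad (G.inv g) a) = a := by
  rw [← G.Ad_comp, G.comp_inv, G.Ad_id]

theorem Ad_inv_cancel' {x y : G.Obj} (g : G.Hom x y) (a : G.G2 x) :
    G.Ad (G.inv g) (G.Ad g a) = a := by
  rw [← G.Ad_comp, G.inv_comp, G.Ad_id]

-- cast lemmas
theorem cast2_mul {x x' : G.Obj} (e : x = x') (a b : G.G2 x) :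
    G.cast2 e (G.mul a b) = G.mul (G.cast2 e a) (G.cast2 e b) := by subst e; rfl

theorem cast2_inv2 {x x' : G.Obj} (e : x = x') (a : G.G2 x) :
    G.cast2 e (G.inv2 a) = G.inv2 (G.cast2 e a) := by subst e; rfl

theorem cast2_Ad {x x' y y' : G.Obj} (ex : x = x') (ey : y = y')
    (g : G.Hom x y) (a : G.G2 x) :
    G.cast2 ey (G.Ad g a) = G.Ad (G.hcast ex ey g) (G.cast2 ex a) := by
  subst ex; subst ey; rfl

theorem hcast_comp {x x' y y' z z' : G.Obj} (ex : x = x') (ey : y = y') (ez : z = z')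
    (g : G.Hom y z) (f : G.Hom x y) :
    G.hcast ex ez (G.comp g f) = G.comp (G.hcast ey ez g) (G.hcast ex ey f) := by
  subst ex; subst ey; subst ez; rfl

theorem hcast_inv {x x' y y' : G.Obj} (ex : x = x') (ey : y = y') (f : G.Hom x y) :
    G.hcast ey ex (G.inv f) = G.inv (G.hcast ex ey f) := by subst ex; subst ey; rfl

theorem hcast_D {x x' : G.Obj} (e : x = x') (a : G.G2 x) :
    G.hcast e e (G.D a) = G.D (G.cast2 e a) := by subst e; rfl

end CrossedGroupoid

namespace CrossedGroupoidHom

variable {A B : CrossedGroupoid}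

theorem map1_inv (F : CrossedGroupoidHom A B) {x y : A.Obj} (f : A.Hom x y) :
    F.map1 (A.inv f) = B.inv (F.map1 f) := by
  apply CrossedGroupoid.comp_left_cancel (g := F.map1 f)
  rw [← F.map1_comp, A.comp_inv, F.map1_id, B.comp_inv]

theorem map2_one (F : CrossedGroupoidHom A B) (x : A.Obj) :
    F.map2 (A.one x) = B.one (F.obj x) := by
  apply CrossedGroupoid.mul_left_cancel' (a := F.map2 (A.one x))
  rw [← F.map2_mul, A.one_mul, B.mul_one]

theorem map2_inv2 (F : CrossedGroupoidHom A B) {x : A.Obj} (a : A.G2 x) :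
    F.map2 (A.inv2 a) = B.inv2 (F.map2 a) := by
  apply CrossedGroupoid.mul_left_cancel' (a := F.map2 a)
  rw [← F.map2_mul, CrossedGroupoid.mul_inv2, CrossedGroupoid.mul_inv2, F.map2_one]

/-- Transport of `map1` along an equality of morphisms of crossed groupoids. -/
theorem map1_eqc {F F' : CrossedGroupoidHom A B} (h : F = F') {x y : A.Obj}
    (f : A.Hom x y) (ex : F'.obj x = F.obj x) (ey : F'.obj y = F.obj y) :
    F.map1 f = B.hcast ex ey (F'.map1 f) := by subst h; rfl

/-- Transport of `map2` along an equality of morphisms of crossed groupoids. -/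
theorem map2_eqc {F F' : CrossedGroupoidHom A B} (h : F = F') {x : A.Obj}
    (a : A.G2 x) (ex : F'.obj x = F.obj x) :
    F.map2 a = B.cast2 ex (F'.map2 a) := by subst h; rfl

end CrossedGroupoidHom

namespace CosimplicialCrossedGroupoid

variable (G : CosimplicialCrossedGroupoid)

/-- Cross-base push of a 1-morphism between vertex objects along α. -/
def push1x {x x' : (G.obj 0).Obj} {p q : ℕ} (α : Fin (p + 1) →o Fin (q + 1))
    {i j : Fin (p + 1)} (h : (G.obj p).Hom (G.X x p i) (G.X x' p j)) :
    (G.obj q).Hom (G.X x q (α i)) (G.X x' q (α j)) :=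
  (G.obj q).hcast (G.X_push x α i) (G.X_push x' α j) ((G.map α).map1 h)

theorem push1_eq_push1x {x : (G.obj 0).Obj} {p q : ℕ} (α : Fin (p + 1) →o Fin (q + 1))
    {i j : Fin (p + 1)} (g : (G.obj p).Hom (G.X x p i) (G.X x p j)) :
    G.push1 α g = G.push1x α g := rfl

theorem push1x_comp {x y z : (G.obj 0).Obj} {p q : ℕ} (α : Fin (p + 1) →o Fin (q + 1))
    {i j k : Fin (p + 1)} (h : (G.obj p).Hom (G.X y p j) (G.X z p k))
    (h' : (G.obj p).Hom (G.X x p i) (G.X y p j)) :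
    G.push1x α ((G.obj p).comp h h') = (G.obj q).comp (G.push1x α h) (G.push1x α h') := by
  unfold push1x
  rw [(G.map α).map1_comp, CrossedGroupoid.hcast_comp (G.X_push x α i) (G.X_push y α j) (G.X_push z α k)]

theorem push1x_inv {x y : (G.obj 0).Obj} {p q : ℕ} (α : Fin (p + 1) →o Fin (q + 1))
    {i j : Fin (p + 1)} (h : (G.obj p).Hom (G.X x p i) (G.X y p j)) :
    G.push1x α ((G.obj p).inv h) = (G.obj q).inv (G.push1x α h) := by
  unfold push1x
  rw [(G.map α).map1_inv, CrossedGroupoid.hcast_inv]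

theorem push1x_D {x : (G.obj 0).Obj} {p q : ℕ} (α : Fin (p + 1) →o Fin (q + 1))
    {i : Fin (p + 1)} (a : (G.obj p).G2 (G.X x p i)) :
    G.push1x α ((G.obj p).D a) = (G.obj q).D (G.push2 α a) := by
  unfold push1x push2
  rw [(G.map α).map_D, CrossedGroupoid.hcast_D]

theorem push2_mul {x : (G.obj 0).Obj} {p q : ℕ} (α : Fin (p + 1) →o Fin (q + 1))
    {i : Fin (p + 1)} (a b : (G.obj p).G2 (G.X x p i)) :
    G.push2 α ((G.obj p).mul a b) = (G.obj q).mul (G.push2 α a) (G.push2 α b) := by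
  unfold push2
  rw [(G.map α).map2_mul, CrossedGroupoid.cast2_mul]

theorem push2_inv2 {x : (G.obj 0).Obj} {p q : ℕ} (α : Fin (p + 1) →o Fin (q + 1))
    {i : Fin (p + 1)} (a : (G.obj p).G2 (G.X x p i)) :
    G.push2 α ((G.obj p).inv2 a) = (G.obj q).inv2 (G.push2 α a) := by
  unfold push2
  rw [(G.map α).map2_inv2, CrossedGroupoid.cast2_inv2]

theorem push2_Ad {x y : (G.obj 0).Obj} {p q : ℕ} (α : Fin (p + 1) →o Fin (q + 1))
    {i j : Fin (p + 1)} (h : (G.obj p).Hom (G.X y p i) (G.X x p j))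
    (a : (G.obj p).G2 (G.X y p i)) :
    G.push2 α ((G.obj p).Ad h a) = (G.obj q).Ad (G.push1x α h) (G.push2 α a) := by
  unfold push2 push1x
  rw [(G.map α).map_Ad, CrossedGroupoid.cast2_Ad (G.X_push y α i) (G.X_push x α j)]

/-- Pushing the image of a 0-level morphism along vertex maps commutes with α. -/
theorem push1x_vtx {x x' : (G.obj 0).Obj} {p q : ℕ} (α : Fin (p + 1) →o Fin (q + 1))
    (i : Fin (p + 1)) (f : (G.obj 0).Hom x x') :
    G.push1x α (show (G.obj p).Hom (G.X x p i) (G.X x' p i) from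
        (G.map (vtxMap i)).map1 f)
      = (G.map (vtxMap (α i))).map1 f := by
  exact (CrossedGroupoidHom.map1_eqc (G.map_comp α (vtxMap i)) f
    (G.X_push x α i) (G.X_push x' α i)).symm

end CosimplicialCrossedGroupoid

theorem CrossedGroupoid.gauge_comp_left {G : CrossedGroupoid} {u0 u1 v0 v1 w0 w1 : G.Obj}
    (F0 : G.Hom u0 v0) (F1 : G.Hom u1 v1) (F0' : G.Hom v0 w0) (F1' : G.Hom v1 w1)
    (g : G.Hom u0 u1) (c : G.G2 u0) (c' : G.G2 v0) :
    G.comp (G.comp (G.comp F1' (G.comp (G.comp (G.comp F1 g) (G.D c)) (G.inv F0))) (G.D c'))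
        (G.inv F0')
      = G.comp (G.comp (G.comp (G.comp F1' F1) g) (G.D (G.mul c (G.Ad (G.inv F0) c'))))
        (G.inv (G.comp F0' F0)) := by
  simp only [CrossedGroupoid.D_mul, CrossedGroupoid.D_Ad,
    CrossedGroupoid.inv_inv, CrossedGroupoid.inv_comp_rev, CrossedGroupoid.comp_assoc,
    CrossedGroupoid.inv_comp_cancel_left, CrossedGroupoid.comp_inv_cancel_left,
    CrossedGroupoid.inv_comp, CrossedGroupoid.comp_inv, CrossedGroupoid.id_comp,
    CrossedGroupoid.comp_id]

theorem CrossedGroupoid.gauge_comp_right {G : CrossedGroupoid} {u0 u1 v0 v1 w0 : G.Obj}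
    (F0 : G.Hom u0 v0) (F1 : G.Hom u1 v1) (F0' : G.Hom v0 w0)
    (g : G.Hom u0 u1) (a c02 c01 : G.G2 u0) (c12 : G.G2 u1) (d02 d01 : G.G2 v0) (d12 : G.G2 v1) :
    G.Ad F0' (G.mul (G.mul (G.mul (G.inv2 d02)
        (G.Ad F0 (G.mul (G.mul (G.mul (G.inv2 c02) a) (G.Ad (G.inv g) c12)) c01)))
        (G.Ad (G.inv (G.comp (G.comp (G.comp F1 g) (G.D c01)) (G.inv F0))) d12)) d01)
      = G.Ad (G.comp F0' F0) (G.mul (G.mul (G.mul (G.inv2 (G.mul c02 (G.Ad (G.inv F0) d02))) a)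
        (G.Ad (G.inv g) (G.mul c12 (G.Ad (G.inv F1) d12)))) (G.mul c01 (G.Ad (G.inv F0) d01))) := by
  simp only [CrossedGroupoid.Ad_comp, CrossedGroupoid.Ad_mul,
    CrossedGroupoid.Ad_inv2, CrossedGroupoid.inv2_mul_rev, CrossedGroupoid.inv2_inv2,
    CrossedGroupoid.inv_comp_rev, CrossedGroupoid.inv_inv, CrossedGroupoid.mul_assoc,
    ← CrossedGroupoid.D_inv2, CrossedGroupoid.peiffer,
    CrossedGroupoid.Ad_inv_cancel, CrossedGroupoid.Ad_inv_cancel',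
    CrossedGroupoid.inv2_mul_cancel_left, CrossedGroupoid.mul_inv2_cancel_left]

/-- composition of gauge transformations:
(f' ∘ f, c ∘ Ad(f_(0)⁻¹)(c')) is a gauge transformation (x,g,a) → (x'',g'',a''). -/
theorem gauge_comp (G : CosimplicialCrossedGroupoid) (P P' P'' : G.Desc)
    (f : (G.obj 0).Hom P.x P'.x) (c : (G.obj 1).G2 (G.X P.x 1 0))
    (hfc : G.IsGauge P.x P.g P.a P'.x P'.g P'.a f c)
    (f' : (G.obj 0).Hom P'.x P''.x) (c' : (G.obj 1).G2 (G.X P'.x 1 0))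
    (hfc' : G.IsGauge P'.x P'.g P'.a P''.x P''.g P''.a f' c') :
    G.IsGauge P.x P.g P.a P''.x P''.g P''.a ((G.obj 0).comp f' f)
      ((G.obj 1).mul c ((G.obj 1).Ad ((G.obj 1).inv
        ((G.map (vtxMap (0 : Fin 2))).map1 f)) c')) := by
  obtain ⟨h1, h2⟩ := hfc
  obtain ⟨h1', h2'⟩ := hfc'
  have key : ∀ (i j : Fin 3) (hij : i ≤ j),
      G.push2 (edgeMap i j hij) ((G.obj 1).mul c ((G.obj 1).Ad ((G.obj 1).inv
          ((G.map (vtxMap (0 : Fin 2))).map1 f)) c'))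
        = (G.obj 2).mul (G.push2 (edgeMap i j hij) c)
            ((G.obj 2).Ad ((G.obj 2).inv ((G.map (vtxMap i : Fin 1 →o Fin 3)).map1 f))
              (G.push2 (edgeMap i j hij) c')) := by
    intro i j hij
    erw [G.push2_mul, G.push2_Ad, G.push1x_inv, G.push1x_vtx (edgeMap i j hij) 0 f]
    rfl
  have hg01 : G.push1 (edgeMap (0 : Fin 3) 1 (by decide)) P'.g
      = (G.obj 2).comp ((G.obj 2).comp ((G.obj 2).comp
          ((G.map (vtxMap (1 : Fin 3))).map1 f)
          (G.push1 (edgeMap (0 : Fin 3) 1 (by decide)) P.g))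
          ((G.obj 2).D (G.push2 (edgeMap (0 : Fin 3) 1 (by decide)) c)))
          ((G.obj 2).inv ((G.map (vtxMap (0 : Fin 3))).map1 f)) := by
    erw [G.push1_eq_push1x, h1, G.push1x_comp, G.push1x_comp, G.push1x_comp,
      G.push1x_inv, G.push1x_D, G.push1x_vtx (edgeMap (0 : Fin 3) 1 (by decide)) 0 f,
      G.push1x_vtx (edgeMap (0 : Fin 3) 1 (by decide)) 1 f, ← G.push1_eq_push1x]
    rfl
  constructor
  · rw [h1', h1]
    erw [CrossedGroupoidHom.map1_comp, CrossedGroupoidHom.map1_comp]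
    exact CrossedGroupoid.gauge_comp_left _ _ _ _ _ _ _
  · rw [h2', h2, hg01, key 0 2 (by decide), key 1 2 (by decide), key 0 1 (by decide)]
    erw [CrossedGroupoidHom.map1_comp]
    exact CrossedGroupoid.gauge_comp_right _ _ _ _ _ _ _ _ _ _ _
end

section
/- If F : G → H is a weak equivalence of crossed groupoids, then for all objects x, x' of G the induced map π₁(F, x, x') : G₁(x,x')/G₂(x) → H₁(F(x),F(x'))/H₂(F(x)) on quotients by the right D-action is bijective. -/
namespace CrossedGroupoid

variable {G : CrossedGroupoid}

theorem eq_inv {x y : G.Obj} {f : G.Hom x y} {p : G.Hom y x}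
    (h : G.comp p f = G.id x) : p = G.inv f := by
  calc p = G.comp p (G.id y) := (G.comp_id p).symm
    _ = G.comp p (G.comp f (G.inv f)) := by rw [G.comp_inv]
    _ = G.comp (G.comp p f) (G.inv f) := (G.comp_assoc _ _ _).symm
    _ = G.comp (G.id x) (G.inv f) := by rw [h]
    _ = G.inv f := G.id_comp _

theorem homRel_equivalence (x x' : G.Obj) : Equivalence (G.homRel x x') := by
  constructor
  · intro g; exact ⟨G.one x, by rw [G.D_one, G.comp_id]⟩
  · rintro g g' ⟨a, rfl⟩
    exact ⟨G.inv2 a, by rw [D_inv2, G.comp_assoc, G.comp_inv, G.comp_id]⟩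
  · rintro g g' g'' ⟨a, rfl⟩ ⟨b, rfl⟩
    exact ⟨G.mul a b, by rw [G.D_mul, G.comp_assoc]⟩

theorem pi0Rel_equivalence : Equivalence G.pi0Rel := by
  constructor
  · intro xx; exact ⟨G.id xx⟩
  · rintro xx yy ⟨f⟩; exact ⟨G.inv f⟩
  · rintro xx yy zz ⟨f⟩ ⟨g⟩; exact ⟨G.comp g f⟩

end CrossedGroupoid

theorem CrossedGroupoidHom.map1_inv_s10 {G H : CrossedGroupoid} (F : CrossedGroupoidHom G H)
    {x y : G.Obj} (f : G.Hom x y) : F.map1 (G.inv f) = H.inv (F.map1 f) :=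
  CrossedGroupoid.eq_inv (by rw [← F.map1_comp, G.inv_comp, F.map1_id])

/-- Lemma 2.6, first part: a weak equivalence of crossed groupoids
induces bijections π₁(G,x,x') → π₁(H,F(x),F(x')). -/
theorem pi1'_bijective {G H : CrossedGroupoid} (F : CrossedGroupoidHom G H)
    (hF : F.IsWeakEquiv) (x x' : G.Obj) :
    Function.Bijective (F.pi1'map x x') := by
  constructor
  · intro p q hpq
    induction p using Quot.ind with | _ g =>
    induction q using Quot.ind with | _ g' =>
    have hpq' : Quot.mk _ (F.map1 g) = Quot.mk _ (F.map1 g') := hpq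
    obtain ⟨b, hb⟩ := ((H.homRel_equivalence _ _).eqvGen_iff).mp (Quot.eqvGen_exact hpq')
    -- hb : F.map1 g' = H.comp (F.map1 g) (H.D b)
    have h2 : F.pi1map x (Quot.mk _ (G.comp (G.inv g) g')) =
        F.pi1map x (Quot.mk _ (G.id x)) := by
      show Quot.mk _ (F.map1 (G.comp (G.inv g) g')) = Quot.mk _ (F.map1 (G.id x))
      refine (Quot.sound ⟨b, ?_⟩).symm
      rw [F.map1_comp, F.map1_inv_s10, hb, ← H.comp_assoc, H.inv_comp, H.id_comp, F.map1_id,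
        H.id_comp]
    obtain ⟨a, ha⟩ := ((G.homRel_equivalence x x).eqvGen_iff).mp
      (Quot.eqvGen_exact ((hF.2.1 x).1 h2)).symm
    -- ha : G.comp (G.inv g) g' = G.comp (G.id x) (G.D a)
    refine Quot.sound ⟨a, ?_⟩
    have : G.comp g (G.comp (G.inv g) g') = G.comp g (G.comp (G.id x) (G.D a)) := by rw [ha]
    rwa [← G.comp_assoc, G.comp_inv, G.id_comp, G.id_comp] at this
  · intro q
    induction q using Quot.ind with | _ h =>
    have h0 : Quot.mk G.pi0Rel x = Quot.mk G.pi0Rel x' :=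
      hF.1.1 (show Quot.mk _ (F.obj x) = Quot.mk _ (F.obj x') from Quot.sound ⟨h⟩)
    obtain ⟨g₀⟩ := (CrossedGroupoid.pi0Rel_equivalence.eqvGen_iff).mp (Quot.eqvGen_exact h0)
    obtain ⟨u, hu⟩ := (hF.2.1 x).2 (Quot.mk _ (H.comp (H.inv (F.map1 g₀)) h))
    induction u using Quot.ind with | _ u =>
    have hu' : Quot.mk _ (F.map1 u) = Quot.mk _ (H.comp (H.inv (F.map1 g₀)) h) := hu
    obtain ⟨b, hb⟩ := ((H.homRel_equivalence _ _).eqvGen_iff).mp (Quot.eqvGen_exact hu'.symm)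
    -- hb : F.map1 u = H.comp (H.comp (H.inv (F.map1 g₀)) h) (H.D b)
    refine ⟨Quot.mk _ (G.comp g₀ u), Quot.sound ⟨H.inv2 b, ?_⟩⟩
    show h = H.comp (F.map1 (G.comp g₀ u)) (H.D (H.inv2 b))
    rw [F.map1_comp, hb, H.D_inv2, H.comp_assoc, H.comp_assoc, H.comp_inv, H.comp_id,
      ← H.comp_assoc, H.comp_inv, H.id_comp]
end
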